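/- The category S^S of small simplicial endofunctors of simplicial sets is closed under composition: if X and Y are small simplicial functors from simplicial sets to simplicial sets, then the composite X ∘ Y is again a small functor. -/

import Mathlib

/-!
Background for "Calculus of functors and model categories" (Biedermann–Chorny–Röndigs).

`SSet` is the category of simplicial sets.  A map of simplicial sets is a *weak
equivalence* if its geometric realization is a homotopy equivalence (by Whitehead's
theorem this is equivalent to being a weak homotopy equivalence, since geometric
realizations are CW complexes), and a *fibration* if it is a Kan fibration, i.e. has
the right lifting property with respect to all horn inclusions.

A (simplicial) functor `X : SSet ⥤ SSet` is *small* if it is a left Kan extension of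
its restriction to some small full subcategory.  `SmF` denotes the category `S^S` of
small functors.  The projective classes on `SmF` are the objectwise weak equivalences
and fibrations; projective cofibrations are defined by the left lifting property
against objectwise trivial fibrations.
-/

open CategoryTheory CategoryTheory.Limits

noncomputable section

/-- A map of simplicial sets is a weak equivalence if its geometric realization
is a homotopy equivalence. -/
def sWEq : MorphismProperty SSet.{0} := fun X Y f =>
  ∃ g : C(SSet.toTop.obj Y, SSet.toTop.obj X),
    (ContinuousMap.Homotopic ((SSet.toTop.map f).hom.comp g) (ContinuousMap.id _)) ∧
    (ContinuousMap.Homotopic (g.comp (SSet.toTop.map f).hom) (ContinuousMap.id _))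

/-- Kan fibrations of simplicial sets. -/
def sFib : MorphismProperty SSet.{0} := fun _ _ f =>
  ∀ ⦃n : ℕ⦄ (i : Fin (n + 2)), HasLiftingProperty (SSet.horn (n + 1) i).ι f

/-- A simplicial set is fibrant if it is a Kan complex. -/
def sFibrant (A : SSet.{0}) : Prop := sFib (terminal.from A)

/-- A homotopy functor is a functor preserving weak equivalences. -/
def IsHtpyFunctor (Z : SSet.{0} ⥤ SSet.{0}) : Prop :=
  ∀ ⦃A B : SSet.{0}⦄ (g : A ⟶ B), sWEq g → sWEq (Z.map g)

/-- A functor `SSet ⥤ SSet` is small if it is a left Kan extension of its restriction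
to some small full subcategory of `SSet`. -/
def IsSmallFunctor (X : SSet.{0} ⥤ SSet.{0}) : Prop :=
  ∃ P : SSet.{0} → Prop, Small.{0} (Subtype P) ∧
    X.IsLeftKanExtension (𝟙 (ObjectProperty.ι P ⋙ X))

/-- The category `S^S` of small functors from simplicial sets to simplicial sets. -/
abbrev SmF := ObjectProperty.FullSubcategory IsSmallFunctor

/-- The underlying natural transformation of a morphism of small functors. -/
def appOf {X Y : SmF} (f : X ⟶ Y) : X.obj ⟶ Y.obj := f.hom

/-- objectwise weak equivalences (the weak equivalences of the projective structure) -/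
def owEq : MorphismProperty SmF := fun _ _ f => ∀ A : SSet.{0}, sWEq ((appOf f).app A)

/-- objectwise fibrations (the fibrations of the projective structure) -/
def owFib : MorphismProperty SmF := fun _ _ f => ∀ A : SSet.{0}, sFib ((appOf f).app A)

/-- projective cofibrations: maps with the left lifting property with respect to
objectwise trivial fibrations -/
def projCof : MorphismProperty SmF := fun _ _ i =>
  ∀ ⦃X Y : SmF⦄ (p : X ⟶ Y), owFib p → owEq p → HasLiftingProperty i p

namespace SmallComp

instance : Countable SimplexCategory := ⟨⟨SimplexCategory.len, fun a b h => SimplexCategory.ext h⟩⟩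
instance : Countable SimplexCategoryᵒᵖ := Function.Injective.countable
  (f := Opposite.unop) (fun _ _ h => Opposite.unop_injective h)
instance (a b : SimplexCategory) : Countable (a ⟶ b) := by
  have h1 : Countable (Fin (a.len+1) →o Fin (b.len+1)) :=
    Function.Injective.countable (f := fun f => (f : Fin (a.len+1) → Fin (b.len+1)))
      (fun f g h => OrderHom.ext _ _ h)
  exact Function.Injective.countable (f := fun (f : a ⟶ b) => f.toOrderHom)
    (fun f g h => SimplexCategory.Hom.ext' _ _ h)
instance (a b : SimplexCategoryᵒᵖ) : Countable (a ⟶ b) :=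
  Function.Injective.countable (f := fun f => f.unop) (fun _ _ h => Quiver.Hom.unop_inj h)

/-- The cardinal size of a simplicial set: the number of all its simplices. -/
def sz (A : SSet.{0}) : Cardinal.{0} := Cardinal.mk (Σ n : SimplexCategoryᵒᵖ, A.obj n)

lemma sz_eq_of_iso {A B : SSet.{0}} (e : A ≅ B) : sz A = sz B :=
  Cardinal.mk_congr (Equiv.sigmaCongrRight fun n => ((e.app n).toEquiv))

/-- A "code" for a simplicial set whose simplices are drawn from `W`. -/
structure SCode (W : Type) : Type where
  S : SimplexCategoryᵒᵖ → Set W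
  map : ∀ {n m : SimplexCategoryᵒᵖ}, (n ⟶ m) → S n → S m
  map_id : ∀ (n : SimplexCategoryᵒᵖ) (x : S n), map (𝟙 n) x = x
  map_comp : ∀ {n m k : SimplexCategoryᵒᵖ} (f : n ⟶ m) (g : m ⟶ k) (x : S n),
    map (f ≫ g) x = map g (map f x)

/-- The simplicial set determined by a code. -/
def SCode.toSSet {W : Type} (c : SCode W) : SSet.{0} where
  obj n := c.S n
  map f := TypeCat.ofHom (fun x => c.map f x)
  map_id n := by ext x; exact congrArg Subtype.val (c.map_id n x)
  map_comp f g := by ext x; exact congrArg Subtype.val (c.map_comp f g x)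

/-- Any simplicial set whose size is at most `#W` is isomorphic to a coded one. -/
lemma exists_code {W : Type} (B : SSet.{0}) (hB : sz B ≤ Cardinal.mk W) :
    ∃ c : SCode W, Nonempty (c.toSSet ≅ B) := by
  obtain ⟨inj⟩ := (Cardinal.le_def _ _).mp hB
  have injn : ∀ n : SimplexCategoryᵒᵖ, Function.Injective (fun x : B.obj n => inj ⟨n, x⟩) := by
    intro n x y h
    exact sigma_mk_injective (inj.injective h)
  let e : ∀ n : SimplexCategoryᵒᵖ, B.obj n ≃ Set.range (fun x : B.obj n => inj ⟨n, x⟩) :=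
    fun n => Equiv.ofInjective _ (injn n)
  refine ⟨⟨fun n => Set.range (fun x : B.obj n => inj ⟨n, x⟩),
    fun {n m} f x => e m (B.map f ((e n).symm x)),
    fun n x => ?_, fun {n m k} f g x => ?_⟩, ⟨NatIso.ofComponents
      (fun n => (Equiv.symm (e n)).toIso) (fun {n m} f => ?_)⟩⟩
  · show e n (B.map (𝟙 n) ((e n).symm x)) = x
    rw [B.map_id]; simp
  · show e k (B.map (f ≫ g) ((e n).symm x)) = e k (B.map g ((e m).symm (e m (B.map f ((e n).symm x)))))
    rw [B.map_comp]; simp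
  · ext x
    show (e m).symm (e m (B.map f ((e n).symm x))) = B.map f ((e n).symm x)
    simp

section Lam
variable (P Q : SSet.{0} → Prop)

/-- A regular cardinal strictly bounding the sizes of all members of `P` and `Q`. -/
def lam [Small.{0} (Subtype P)] [Small.{0} (Subtype Q)] : Cardinal.{0} :=
  Order.succ (Cardinal.aleph0 ⊔
    ((⨆ i : Shrink.{0} (Subtype P), sz (((equivShrink (Subtype P)).symm i : Subtype P) : SSet.{0})) ⊔
     (⨆ i : Shrink.{0} (Subtype Q), sz (((equivShrink (Subtype Q)).symm i : Subtype Q) : SSet.{0}))))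

variable [Small.{0} (Subtype P)] [Small.{0} (Subtype Q)]

lemma aleph0_lt_lam : Cardinal.aleph0 < lam P Q :=
  Order.lt_succ_iff.mpr le_sup_left

lemma isRegular_lam : (lam P Q).IsRegular :=
  Cardinal.isRegular_succ le_sup_left

lemma sz_lt_lam_of_P {b : SSet.{0}} (hb : P b) : sz b < lam P Q := by
  refine Order.lt_succ_iff.mpr (le_sup_of_le_right (le_sup_of_le_left ?_))
  have := le_ciSup (f := fun i : Shrink.{0} (Subtype P) =>
      sz (((equivShrink (Subtype P)).symm i : Subtype P) : SSet.{0}))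
    (Cardinal.bddAbove_range _) (equivShrink (Subtype P) ⟨b, hb⟩)
  simpa using this

lemma sz_lt_lam_of_Q {b : SSet.{0}} (hb : Q b) : sz b < lam P Q := by
  refine Order.lt_succ_iff.mpr (le_sup_of_le_right (le_sup_of_le_right ?_))
  have := le_ciSup (f := fun i : Shrink.{0} (Subtype Q) =>
      sz (((equivShrink (Subtype Q)).symm i : Subtype Q) : SSet.{0}))
    (Cardinal.bddAbove_range _) (equivShrink (Subtype Q) ⟨b, hb⟩)
  simpa using this

end Lam
section R
variable (P Q : SSet.{0} → Prop) [Small.{0} (Subtype P)] [Small.{0} (Subtype Q)]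

/-- The universe of simplices for codes. -/
def Wt : Type := (lam P Q).out

lemma mk_Wt : Cardinal.mk (Wt P Q) = lam P Q := Cardinal.mk_out _

/-- The enlarged small full subcategory: `Q` together with (codes for) all
`lam`-small simplicial sets. -/
def RR : SSet.{0} → Prop := fun A =>
  Q A ∨ ∃ c : {c : SCode (Wt P Q) // sz c.toSSet < lam P Q}, (c : SCode (Wt P Q)).toSSet = A

lemma small_RR : Small.{0} (Subtype (RR P Q)) := by
  refine small_of_surjective (f := fun x : Subtype Q ⊕ {c : SCode (Wt P Q) // sz c.toSSet < lam P Q} =>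
    (match x with
      | Sum.inl q => ⟨q.1, Or.inl q.2⟩
      | Sum.inr c => ⟨(c : SCode (Wt P Q)).toSSet, Or.inr ⟨c, rfl⟩⟩ : Subtype (RR P Q))) ?_
  rintro ⟨A, hA | ⟨c, hc⟩⟩
  · exact ⟨Sum.inl ⟨A, hA⟩, rfl⟩
  · exact ⟨Sum.inr c, Subtype.ext hc⟩

lemma sz_lt_of_RR {A : SSet.{0}} (h : RR P Q A) : sz A < lam P Q := by
  rcases h with h | ⟨c, hc⟩
  · exact sz_lt_lam_of_Q P Q h
  · rw [← hc]; exact c.2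

lemma Q_subset_RR {A : SSet.{0}} (h : Q A) : RR P Q A := Or.inl h

/-- Any `lam`-small simplicial set is isomorphic to a member of `RR`. -/
lemma exists_RR_iso (B : SSet.{0}) (hB : sz B < lam P Q) :
    ∃ (r : SSet.{0}), RR P Q r ∧ Nonempty (r ≅ B) := by
  obtain ⟨c, ⟨e⟩⟩ := exists_code (W := Wt P Q) B (by rw [mk_Wt]; exact hB.le)
  refine ⟨c.toSSet, Or.inr ⟨⟨c, ?_⟩, rfl⟩, ⟨e⟩⟩
  rw [sz_eq_of_iso e]; exact hB

/-- Size bound for colimits of small diagrams of small simplicial sets. -/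
lemma sz_colimit_lt (J : Type) [SmallCategory J] (D : J ⥤ SSet.{0})
    (hJ : Cardinal.mk J < lam P Q) (hD : ∀ j, sz (D.obj j) < lam P Q) :
    sz (colimit D) < lam P Q := by
  have hsurj : Function.Surjective
      (fun p : Σ j : J, (Σ n : SimplexCategoryᵒᵖ, (D.obj j).obj n) =>
        (⟨p.2.1, (colimitObjIsoColimitCompEvaluation D p.2.1).inv
          (colimit.ι (D ⋙ (evaluation _ _).obj p.2.1) p.1 p.2.2)⟩ :
            Σ n : SimplexCategoryᵒᵖ, (colimit D).obj n)) := by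
    rintro ⟨n, y⟩
    obtain ⟨j, x, hx⟩ := Types.jointly_surjective'
      ((colimitObjIsoColimitCompEvaluation D n).hom y)
    refine ⟨⟨j, ⟨n, x⟩⟩, ?_⟩
    simp only at hx ⊢
    rw [hx]
    congr 1
    exact congrFun (congrArg (fun (f : _ ⟶ _) => (f : _ → _))
      (colimitObjIsoColimitCompEvaluation D n).hom_inv_id) y
  have h1 : sz (colimit D) ≤ Cardinal.mk (Σ j : J, (Σ n : SimplexCategoryᵒᵖ, (D.obj j).obj n)) :=
    Cardinal.mk_le_of_surjective hsurj
  refine h1.trans_lt ?_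
  rw [Cardinal.mk_sigma]
  exact Cardinal.sum_lt_of_isRegular (isRegular_lam P Q) hJ (fun j => hD j)

end R
section UB
variable (P Q : SSet.{0} → Prop) [Small.{0} (Subtype P)] [Small.{0} (Subtype Q)]
variable (A : SSet.{0})

/-- Upper bounds for small families in the comma category `R/A`. -/
lemma UB1 (J : Type) (hJ : Cardinal.mk J < lam P Q)
    (r : J → SSet.{0}) (hr : ∀ j, RR P Q (r j)) (g : ∀ j, r j ⟶ A) :
    ∃ (r₀ : SSet.{0}) (_ : RR P Q r₀) (g₀ : r₀ ⟶ A) (u : ∀ j, r j ⟶ r₀),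
      ∀ j, u j ≫ g₀ = g j := by
  have hsz : sz (∐ r) < lam P Q := by
    have h1 : sz (colimit (Discrete.functor r)) < lam P Q := by
      refine sz_colimit_lt P Q (Discrete J) (Discrete.functor r) ?_ ?_
      · exact (Cardinal.mk_congr (discreteEquiv (α := J))).le.trans_lt hJ
      · rintro ⟨j⟩; exact sz_lt_of_RR P Q (hr j)
    exact h1
  obtain ⟨r₀, hr₀, ⟨e⟩⟩ := exists_RR_iso P Q (∐ r) hsz
  exact ⟨r₀, hr₀, e.hom ≫ Sigma.desc g, fun j => Sigma.ι r j ≫ e.inv, fun j => by simp⟩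

/-- Simultaneous coequalizing upper bounds for small families of parallel pairs in `R/A`. -/
lemma UB2 (E : Type) (hE : Cardinal.mk E < lam P Q)
    (r₀ : SSet.{0}) (hr₀ : RR P Q r₀) (g₀ : r₀ ⟶ A)
    (t : E → SSet.{0}) (ht : ∀ e, RR P Q (t e)) (h : ∀ e, t e ⟶ A)
    (u v : ∀ e, r₀ ⟶ t e) (hu : ∀ e, u e ≫ h e = g₀) (hv : ∀ e, v e ≫ h e = g₀) :
    ∃ (r₁ : SSet.{0}) (_ : RR P Q r₁) (g₁ : r₁ ⟶ A) (s : r₀ ⟶ r₁) (w : ∀ e, t e ⟶ r₁),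
      s ≫ g₁ = g₀ ∧ (∀ e, w e ≫ g₁ = h e) ∧ (∀ e, u e ≫ w e = s) ∧ (∀ e, v e ≫ w e = s) := by
  classical
  let I : MultispanIndex ⟨E ⊕ E, Option E, fun x => some (Sum.elim id id x), fun _ => none⟩
      SSet.{0} :=
    { left := fun _ => r₀
      right := fun o => match o with | none => r₀ | some e => t e
      fst := fun x => Sum.rec (fun e => u e) (fun e => v e) x
      snd := fun _ => 𝟙 r₀ }
  have hsz : sz (multicoequalizer I) < lam P Q := by
    refine sz_colimit_lt P Q _ I.multispan ?_ ?_
    · refine lt_of_le_of_lt (Cardinal.mk_le_of_surjective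
        (f := fun x : (E ⊕ E) ⊕ Option E => match x with
          | Sum.inl a => WalkingMultispan.left a
          | Sum.inr b => WalkingMultispan.right b) ?_) ?_
      · rintro (a | b); exacts [⟨Sum.inl a, rfl⟩, ⟨Sum.inr b, rfl⟩]
      · have hl : Cardinal.aleph0 ≤ lam P Q := (aleph0_lt_lam P Q).le
        have hO : Cardinal.mk (Option E) < lam P Q := by
          rw [Cardinal.mk_option]
          exact Cardinal.add_lt_of_lt hl hE ((Cardinal.one_lt_aleph0).trans (aleph0_lt_lam P Q))
        have hEE : Cardinal.mk (E ⊕ E) < lam P Q := by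
          rw [Cardinal.mk_sum]; simpa using Cardinal.add_lt_of_lt hl hE hE
        rw [Cardinal.mk_sum]; simpa using Cardinal.add_lt_of_lt hl hEE hO
    · rintro (a | b)
      · exact sz_lt_of_RR P Q hr₀
      · rcases b with _ | e
        · exact sz_lt_of_RR P Q hr₀
        · exact sz_lt_of_RR P Q (ht e)
  obtain ⟨r₁, hr₁, ⟨e⟩⟩ := exists_RR_iso P Q (multicoequalizer I) hsz
  let k : ∀ o : Option E, I.right o ⟶ A := fun o => match o with | none => g₀ | some e => h e
  have hcond : ∀ x : E ⊕ E, I.fst x ≫ k _ = I.snd x ≫ k _ := by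
    rintro (a | a) <;> simp [I, k, hu, hv]
  refine ⟨r₁, hr₁, e.hom ≫ Multicoequalizer.desc I A k hcond,
    Multicoequalizer.π I none ≫ e.inv, fun e' => Multicoequalizer.π I (some e') ≫ e.inv,
    ?_, fun e' => ?_, fun e' => ?_, fun e' => ?_⟩
  · simp [k, Multicoequalizer.π_desc]
  · simp [k, Multicoequalizer.π_desc]
  · have hc : u e' ≫ Multicoequalizer.π I (some e') = Multicoequalizer.π I none := by
      simpa [I] using Multicoequalizer.condition I (Sum.inl e')
    rw [← Category.assoc, hc]
  · have hc : v e' ≫ Multicoequalizer.π I (some e') = Multicoequalizer.π I none := by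
      simpa [I] using Multicoequalizer.condition I (Sum.inr e')
    rw [← Category.assoc, hc]

end UB
section Cat
variable (P : SSet.{0} → Prop) [Small.{0} (Subtype P)]

lemma small_fullSub : Small.{0} (ObjectProperty.FullSubcategory P) :=
  (small_congr (⟨fun x => ⟨x.1, x.2⟩, fun x => ⟨x.1, x.2⟩, fun _ => rfl, fun _ => rfl⟩ :
    ObjectProperty.FullSubcategory P ≃ Subtype P)).mpr inferInstance

instance : LocallySmall.{0} (ObjectProperty.FullSubcategory P) := ⟨fun {X Y} => inferInstance⟩

lemma small_CSA (K : SSet.{0}) :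
    Small.{0} (CostructuredArrow (ObjectProperty.ι P) K) := by
  haveI := small_fullSub P
  refine (small_congr (⟨fun o => ⟨o.left, o.hom⟩, fun p => CostructuredArrow.mk p.2,
    fun o => (CostructuredArrow.eq_mk o).symm, fun p => rfl⟩ :
      CostructuredArrow (ObjectProperty.ι P) K ≃
        Σ r : ObjectProperty.FullSubcategory P, ((ObjectProperty.ι P).obj r ⟶ K))).mpr ?_
  infer_instance

lemma essSmall_CSA (K : SSet.{0}) :
    EssentiallySmall.{0} (CostructuredArrow (ObjectProperty.ι P) K) := by
  haveI := small_CSA P K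
  haveI : LocallySmall.{0} (CostructuredArrow (ObjectProperty.ι P) K) :=
    locallySmall_of_faithful (CostructuredArrow.proj (ObjectProperty.ι P) K)
  exact essentiallySmall_of_small_of_locallySmall _

lemma hasColimitsOfShape_CSA (K : SSet.{0}) {C : Type*} [Category C] [HasColimitsOfSize.{0,0} C] :
    HasColimitsOfShape (CostructuredArrow (ObjectProperty.ι P) K) C := by
  haveI := essSmall_CSA P K
  exact hasColimitsOfShape_of_essentiallySmall _ _

lemma hasPointwiseLKE (F : ObjectProperty.FullSubcategory P ⥤ SSet.{0}) :
    Functor.HasPointwiseLeftKanExtension (ObjectProperty.ι P) F := fun K => by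
  haveI := hasColimitsOfShape_CSA P K (C := SSet.{0})
  infer_instance

end Cat
section YR
variable (P Q : SSet.{0} → Prop) [Small.{0} (Subtype P)] [Small.{0} (Subtype Q)]
variable (Y : SSet.{0} ⥤ SSet.{0})

/-- The canonical cocone expressing `Y A` as a colimit over `R/A`. -/
@[simps]
def coconeYR (A : SSet.{0}) :
    Cocone (CostructuredArrow.proj (ObjectProperty.ι (RR P Q)) A ⋙
      ObjectProperty.ι (RR P Q) ⋙ Y) where
  pt := Y.obj A
  ι :=
    { app := fun ω => Y.map ω.hom
      naturality := fun ω ω' m => by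
        have hw := CostructuredArrow.w m
        dsimp at hw ⊢
        rw [Category.comp_id]; exact (Y.map_comp _ _).symm.trans (congrArg Y.map hw) }

/-- The inclusion of comma categories induced by `Q ⊆ R`. -/
@[simps]
def toR (A : SSet.{0}) : CostructuredArrow (ObjectProperty.ι Q) A ⥤
    CostructuredArrow (ObjectProperty.ι (RR P Q)) A where
  obj ψ := CostructuredArrow.mk
    (Y := (⟨ψ.left.1, Q_subset_RR P Q ψ.left.2⟩ : ObjectProperty.FullSubcategory (RR P Q))) ψ.hom
  map {ψ ψ'} m := CostructuredArrow.homMk ⟨m.left.hom⟩ (CostructuredArrow.w m)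
  map_id ψ := by apply CostructuredArrow.hom_ext; rfl
  map_comp f g := by apply CostructuredArrow.hom_ext; rfl

variable {Q Y} in
/-- If `Y` is a strict pointwise Lan from `Q`, the canonical cocones over the larger
subcategory `R ⊇ Q` are again colimits. -/
def isColimitYR
    (hQpt : (Functor.LeftExtension.mk Y
      (𝟙 (ObjectProperty.ι Q ⋙ Y))).IsPointwiseLeftKanExtension)
    (A : SSet.{0}) : IsColimit (coconeYR P Q Y A) := by
  refine
    { desc := fun c => (hQpt A).desc (Cocone.whisker (toR P Q A) c)
      fac := fun c ω => ?_
      uniq := fun c m hm => ?_ }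
  · refine (hQpt ω.left.1).hom_ext (fun ψ => ?_)
    have h1 := (hQpt A).fac (Cocone.whisker (toR P Q A) c)
      (CostructuredArrow.mk (ψ.hom ≫ ω.hom))
    have h2 := c.w (CostructuredArrow.homMk ⟨ψ.hom⟩ rfl :
      (toR P Q A).obj (CostructuredArrow.mk (ψ.hom ≫ ω.hom)) ⟶ ω)
    have h3 : Y.map ψ.hom ≫ Y.map ω.hom ≫ (hQpt A).desc (Cocone.whisker (toR P Q A) c) =
        Y.map ψ.hom ≫ c.ι.app ω := by
      exact (Category.assoc _ _ _).symm.trans ((congrArg (· ≫ (hQpt A).desc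
        (Cocone.whisker (toR P Q A) c)) (Y.map_comp _ _).symm).trans (h1.trans h2.symm))
    exact h3
  · refine (hQpt A).hom_ext (fun ψ => ?_)
    have h1 := (hQpt A).fac (Cocone.whisker (toR P Q A) c) ψ
    exact (hm ((toR P Q A).obj ψ)).trans h1.symm

end YR
section Filt
variable {Pr : SSet.{0} → Prop}

/-- Helper to build objects of comma categories of full subcategories. -/
def mkC (r : SSet.{0}) (hr : Pr r) {A : SSet.{0}} (g : r ⟶ A) :
    CostructuredArrow (ObjectProperty.ι Pr) A :=
  CostructuredArrow.mk (Y := (⟨r, hr⟩ : ObjectProperty.FullSubcategory Pr)) g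

@[simp] lemma mkC_hom (r : SSet.{0}) (hr : Pr r) {A : SSet.{0}} (g : r ⟶ A) :
    (mkC r hr g).hom = g := rfl

@[simp] lemma mkC_left (r : SSet.{0}) (hr : Pr r) {A : SSet.{0}} (g : r ⟶ A) :
    (mkC r hr g).left = (⟨r, hr⟩ : ObjectProperty.FullSubcategory Pr) := rfl

end Filt

section Filt2
variable (P Q : SSet.{0} → Prop) [Small.{0} (Subtype P)] [Small.{0} (Subtype Q)]

lemma mk_lt_lam_of_countable (J : Type) [Countable J] : Cardinal.mk J < lam P Q :=
  lt_of_le_of_lt Cardinal.mk_le_aleph0 (aleph0_lt_lam P Q)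

lemma isFiltered_RA (A : SSet.{0}) :
    IsFiltered (CostructuredArrow (ObjectProperty.ι (RR P Q)) A) := by
  have hobjs : ∀ (ω₁ ω₂ : CostructuredArrow (ObjectProperty.ι (RR P Q)) A),
      ∃ (ω : CostructuredArrow (ObjectProperty.ι (RR P Q)) A)
        (_ : ω₁ ⟶ ω) (_ : ω₂ ⟶ ω), True := by
    intro ω₁ ω₂
    obtain ⟨r₀, hr₀, g₀, u, hu⟩ := UB1 P Q A Bool (mk_lt_lam_of_countable P Q Bool)
      (fun b => cond b ω₁.left.1 ω₂.left.1) (fun b => by cases b <;> [exact ω₂.left.2; exact ω₁.left.2])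
      (fun b => by cases b <;> [exact ω₂.hom; exact ω₁.hom])
    exact ⟨mkC r₀ hr₀ g₀,
      CostructuredArrow.homMk ⟨u true⟩ (hu true),
      CostructuredArrow.homMk ⟨u false⟩ (hu false), trivial⟩
  have hmaps : ∀ (ω₁ ω₂ : CostructuredArrow (ObjectProperty.ι (RR P Q)) A)
      (f g : ω₁ ⟶ ω₂), ∃ (ω : CostructuredArrow (ObjectProperty.ι (RR P Q)) A)
        (w : ω₂ ⟶ ω), f ≫ w = g ≫ w := by
    intro ω₁ ω₂ f g
    obtain ⟨r₁, hr₁, g₁, s, w, hs, hw, hfw, hgw⟩ := UB2 P Q A PUnit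
      (mk_lt_lam_of_countable P Q PUnit) ω₁.left.1 ω₁.left.2 ω₁.hom
      (fun _ => ω₂.left.1) (fun _ => ω₂.left.2) (fun _ => ω₂.hom)
      (fun _ => f.left.hom) (fun _ => g.left.hom)
      (fun _ => CostructuredArrow.w f) (fun _ => CostructuredArrow.w g)
    refine ⟨mkC r₁ hr₁ g₁,
      CostructuredArrow.homMk ⟨w PUnit.unit⟩ (hw PUnit.unit), ?_⟩
    apply CostructuredArrow.hom_ext
    exact ObjectProperty.hom_ext _ ((hfw PUnit.unit).trans (hgw PUnit.unit).symm)
  have hne : Nonempty (CostructuredArrow (ObjectProperty.ι (RR P Q)) A) := by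
    obtain ⟨r₀, hr₀, g₀, u, hu⟩ := UB1 P Q A PEmpty (mk_lt_lam_of_countable P Q PEmpty)
      (fun j => j.elim) (fun j => j.elim) (fun j => j.elim)
    exact ⟨mkC r₀ hr₀ g₀⟩
  exact { toIsFilteredOrEmpty := ⟨fun ω₁ ω₂ => hobjs ω₁ ω₂, fun {ω₁ ω₂} f g => hmaps ω₁ ω₂ f g⟩
          nonempty := hne }

end Filt2
section Fact
variable (P Q : SSet.{0} → Prop) [Small.{0} (Subtype P)] [Small.{0} (Subtype Q)]
variable (Y : SSet.{0} ⥤ SSet.{0})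

variable {P Q Y} in
/-- Factorization of maps from a `lam`-small simplicial set into `Y A` through the
canonical colimit over `R/A`. -/
lemma factor_through (hQpt : (Functor.LeftExtension.mk Y
      (𝟙 (ObjectProperty.ι Q ⋙ Y))).IsPointwiseLeftKanExtension)
    (A : SSet.{0}) (b : SSet.{0}) (hb : sz b < lam P Q) (f : b ⟶ Y.obj A) :
    ∃ (r : SSet.{0}) (_ : RR P Q r) (g : r ⟶ A) (f' : b ⟶ Y.obj r),
      f' ≫ Y.map g = f := by
  classical
  haveI := small_RR P Q
  haveI : HasColimitsOfShape (CostructuredArrow (ObjectProperty.ι (RR P Q)) A)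
      (Type 0) := hasColimitsOfShape_CSA _ A
  haveI := isFiltered_RA P Q A
  have hc : IsColimit (coconeYR P Q Y A) := isColimitYR P hQpt A
  have hcn : ∀ n : SimplexCategoryᵒᵖ, IsColimit
      ((((evaluation SimplexCategoryᵒᵖ (Type 0)).obj n)).mapCocone (coconeYR P Q Y A)) :=
    fun n => isColimitOfPreserves _ hc
  -- step 1 : find a stage for each simplex of `b`
  have step1 : ∀ p : Σ n : SimplexCategoryᵒᵖ, b.obj n,
      ∃ (ω : CostructuredArrow (ObjectProperty.ι (RR P Q)) A)
        (y : (Y.obj ω.left.1).obj p.1), (Y.map ω.hom).app p.1 y = f.app p.1 p.2 := by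
    intro p
    obtain ⟨ω, y, hy⟩ := Types.jointly_surjective _ (hcn p.1) (f.app p.1 p.2)
    exact ⟨ω, y, hy⟩
  choose ω0 y0 hy0 using step1
  -- step 2 : common stage
  obtain ⟨r₀, hr₀, g₀, u, hu⟩ := UB1 P Q A (Σ n : SimplexCategoryᵒᵖ, b.obj n) hb
    (fun p => (ω0 p).left.1) (fun p => (ω0 p).left.2) (fun p => (ω0 p).hom)
  let y1 : ∀ p : Σ n : SimplexCategoryᵒᵖ, b.obj n, (Y.obj r₀).obj p.1 :=
    fun p => (Y.map (u p)).app p.1 (y0 p)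
  have hy1 : ∀ p, (Y.map g₀).app p.1 (y1 p) = f.app p.1 p.2 := by
    intro p
    have h2 : (Y.map (u p) ≫ Y.map g₀).app p.1 (y0 p)
        = (Y.map ((ω0 p).hom)).app p.1 (y0 p) := by
      rw [← Y.map_comp, hu p]
    simpa [y1] using h2.trans (hy0 p)
  -- step 3 : equations
  have hEqn : Cardinal.mk (Σ (p : Σ n : SimplexCategoryᵒᵖ, b.obj n)
      (m : SimplexCategoryᵒᵖ), (p.1 ⟶ m)) < lam P Q := by
    rw [Cardinal.mk_sigma]
    exact Cardinal.sum_lt_of_isRegular (isRegular_lam P Q) hb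
      (fun p => mk_lt_lam_of_countable P Q _)
  let aE : ∀ e : Σ (p : Σ n : SimplexCategoryᵒᵖ, b.obj n) (m : SimplexCategoryᵒᵖ), (p.1 ⟶ m),
      (Y.obj r₀).obj e.2.1 := fun e => (Y.obj r₀).map e.2.2 (y1 e.1)
  let bE : ∀ e : Σ (p : Σ n : SimplexCategoryᵒᵖ, b.obj n) (m : SimplexCategoryᵒᵖ), (p.1 ⟶ m),
      (Y.obj r₀).obj e.2.1 := fun e => y1 ⟨e.2.1, b.map e.2.2 e.1.2⟩
  have key : ∀ e : Σ (p : Σ n : SimplexCategoryᵒᵖ, b.obj n) (m : SimplexCategoryᵒᵖ), (p.1 ⟶ m),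
      (Y.map g₀).app e.2.1 (aE e) = (Y.map g₀).app e.2.1 (bE e) := by
    rintro ⟨p, m, φ⟩
    have h3 : (Y.map g₀).app m ((Y.obj r₀).map φ (y1 p))
        = (Y.obj A).map φ ((Y.map g₀).app p.1 (y1 p)) :=
      (FunctorToTypes.naturality (Y.map g₀) φ (y1 p))
    have h4 : (Y.obj A).map φ (f.app p.1 p.2) = f.app m (b.map φ p.2) :=
      (FunctorToTypes.naturality f φ p.2).symm
    show (Y.map g₀).app m ((Y.obj r₀).map φ (y1 p)) = (Y.map g₀).app m (y1 ⟨m, b.map φ p.2⟩)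
    rw [h3, hy1 p, h4, hy1 ⟨m, b.map φ p.2⟩]
  have key2 : ∀ e : Σ (p : Σ n : SimplexCategoryᵒᵖ, b.obj n) (m : SimplexCategoryᵒᵖ), (p.1 ⟶ m),
      ∃ (κ : CostructuredArrow (ObjectProperty.ι (RR P Q)) A)
        (uu : mkC r₀ hr₀ g₀ ⟶ κ) (vv : mkC r₀ hr₀ g₀ ⟶ κ),
          (Y.map uu.left.hom).app e.2.1 (aE e) = (Y.map vv.left.hom).app e.2.1 (bE e) := by
    intro e
    have := (Types.FilteredColimit.isColimit_eq_iff
      (t := (((evaluation SimplexCategoryᵒᵖ (Type 0)).obj e.2.1)).mapCocone (coconeYR P Q Y A))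
      _ (hcn e.2.1) (i := mkC r₀ hr₀ g₀) (j := mkC r₀ hr₀ g₀)
      (xi := aE e) (xj := bE e)).mp (key e)
    obtain ⟨κ, uu, vv, h⟩ := this
    exact ⟨κ, uu, vv, h⟩
  choose kE uE vE hkey using key2
  -- step 4 : simultaneous coequalization
  obtain ⟨r₁, hr₁, g₁, s, w, hs, hw, hus, hvs⟩ := UB2 P Q A _ hEqn r₀ hr₀ g₀
    (fun e => (kE e).left.1) (fun e => (kE e).left.2) (fun e => (kE e).hom)
    (fun e => (uE e).left.hom) (fun e => (vE e).left.hom)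
    (fun e => CostructuredArrow.w (uE e)) (fun e => CostructuredArrow.w (vE e))
  have hsab : ∀ e : Σ (p : Σ n : SimplexCategoryᵒᵖ, b.obj n) (m : SimplexCategoryᵒᵖ), (p.1 ⟶ m),
      (Y.map s).app e.2.1 (aE e) = (Y.map s).app e.2.1 (bE e) := by
    intro e
    have h5 : (Y.map ((uE e).left.hom ≫ w e)).app e.2.1 (aE e)
        = (Y.map ((vE e).left.hom ≫ w e)).app e.2.1 (bE e) := by
      rw [Y.map_comp, Y.map_comp]
      show (Y.map (w e)).app e.2.1 ((Y.map (uE e).left.hom).app e.2.1 (aE e))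
        = (Y.map (w e)).app e.2.1 ((Y.map (vE e).left.hom).app e.2.1 (bE e))
      rw [hkey e]
    exact (congrArg (fun t => (Y.map t).app e.2.1 (aE e)) (hus e)).symm.trans
      (h5.trans (congrArg (fun t => (Y.map t).app e.2.1 (bE e)) (hvs e)))
  -- step 5 : assemble the factorization
  refine ⟨r₁, hr₁, g₁,
    { app := fun n => TypeCat.ofHom (fun x => (Y.map s).app n (y1 ⟨n, x⟩))
      naturality := fun n m φ => ?_ }, ?_⟩
  · ext x
    show (Y.map s).app m (y1 ⟨m, b.map φ x⟩) = (Y.obj r₁).map φ ((Y.map s).app n (y1 ⟨n, x⟩))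
    have h6 := (hsab ⟨⟨n, x⟩, m, φ⟩).symm
    show ((Y.map s).app m (bE ⟨⟨n, x⟩, m, φ⟩) = _)
    rw [h6]
    exact FunctorToTypes.naturality (Y.map s) φ (y1 ⟨n, x⟩)
  · apply NatTrans.ext
    ext n x
    show (Y.map s ≫ Y.map g₁).app n (y1 ⟨n, x⟩) = f.app n x
    rw [← Y.map_comp, hs]
    exact hy1 ⟨n, x⟩

variable {P Q Y} in
/-- Two factorizations through the canonical `R/A`-colimit are connected at a common stage. -/
lemma factor_connect (hQpt : (Functor.LeftExtension.mk Y
      (𝟙 (ObjectProperty.ι Q ⋙ Y))).IsPointwiseLeftKanExtension)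
    (A : SSet.{0}) (b : SSet.{0}) (hb : sz b < lam P Q)
    {r₁ r₂ : SSet.{0}} (hr₁ : RR P Q r₁) (hr₂ : RR P Q r₂)
    (g₁ : r₁ ⟶ A) (g₂ : r₂ ⟶ A) (f₁ : b ⟶ Y.obj r₁) (f₂ : b ⟶ Y.obj r₂)
    (hf : f₁ ≫ Y.map g₁ = f₂ ≫ Y.map g₂) :
    ∃ (r₃ : SSet.{0}) (_ : RR P Q r₃) (g₃ : r₃ ⟶ A) (w₁ : r₁ ⟶ r₃) (w₂ : r₂ ⟶ r₃),
      w₁ ≫ g₃ = g₁ ∧ w₂ ≫ g₃ = g₂ ∧ f₁ ≫ Y.map w₁ = f₂ ≫ Y.map w₂ := by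
  classical
  haveI := small_RR P Q
  haveI : HasColimitsOfShape (CostructuredArrow (ObjectProperty.ι (RR P Q)) A)
      (Type 0) := hasColimitsOfShape_CSA _ A
  haveI := isFiltered_RA P Q A
  have hc : IsColimit (coconeYR P Q Y A) := isColimitYR P hQpt A
  have hcn : ∀ n : SimplexCategoryᵒᵖ, IsColimit
      ((((evaluation SimplexCategoryᵒᵖ (Type 0)).obj n)).mapCocone (coconeYR P Q Y A)) :=
    fun n => isColimitOfPreserves _ hc
  obtain ⟨r₀, hr₀, g₀, u, hu⟩ := UB1 P Q A Bool (mk_lt_lam_of_countable P Q Bool)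
    (fun j => cond j r₁ r₂) (fun j => by cases j <;> [exact hr₂; exact hr₁])
    (fun j => by cases j <;> [exact g₂; exact g₁])
  let aE : ∀ p : Σ n : SimplexCategoryᵒᵖ, b.obj n, (Y.obj r₀).obj p.1 :=
    fun p => (Y.map (u true)).app p.1 (f₁.app p.1 p.2)
  let bE : ∀ p : Σ n : SimplexCategoryᵒᵖ, b.obj n, (Y.obj r₀).obj p.1 :=
    fun p => (Y.map (u false)).app p.1 (f₂.app p.1 p.2)
  have key : ∀ p : Σ n : SimplexCategoryᵒᵖ, b.obj n,
      (Y.map g₀).app p.1 (aE p) = (Y.map g₀).app p.1 (bE p) := by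
    intro p
    have h1 : (Y.map (u true) ≫ Y.map g₀).app p.1 (f₁.app p.1 p.2)
        = (Y.map (u false) ≫ Y.map g₀).app p.1 (f₂.app p.1 p.2) := by
      rw [← Y.map_comp, ← Y.map_comp, hu true, hu false]
      show (f₁ ≫ Y.map g₁).app p.1 p.2 = (f₂ ≫ Y.map g₂).app p.1 p.2
      rw [hf]
    exact h1
  have key2 : ∀ p : Σ n : SimplexCategoryᵒᵖ, b.obj n,
      ∃ (κ : CostructuredArrow (ObjectProperty.ι (RR P Q)) A)
        (uu : mkC r₀ hr₀ g₀ ⟶ κ) (vv : mkC r₀ hr₀ g₀ ⟶ κ),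
          (Y.map uu.left.hom).app p.1 (aE p) = (Y.map vv.left.hom).app p.1 (bE p) := by
    intro p
    have := (Types.FilteredColimit.isColimit_eq_iff
      (t := (((evaluation SimplexCategoryᵒᵖ (Type 0)).obj p.1)).mapCocone (coconeYR P Q Y A))
      _ (hcn p.1) (i := mkC r₀ hr₀ g₀) (j := mkC r₀ hr₀ g₀)
      (xi := aE p) (xj := bE p)).mp (key p)
    obtain ⟨κ, uu, vv, h⟩ := this
    exact ⟨κ, uu, vv, h⟩
  choose kE uE vE hkey using key2
  obtain ⟨r₃, hr₃, g₃, s, w, hs, hw, hus, hvs⟩ := UB2 P Q A _ hb r₀ hr₀ g₀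
    (fun p => (kE p).left.1) (fun p => (kE p).left.2) (fun p => (kE p).hom)
    (fun p => (uE p).left.hom) (fun p => (vE p).left.hom)
    (fun p => CostructuredArrow.w (uE p)) (fun p => CostructuredArrow.w (vE p))
  have hsab : ∀ p : Σ n : SimplexCategoryᵒᵖ, b.obj n,
      (Y.map s).app p.1 (aE p) = (Y.map s).app p.1 (bE p) := by
    intro p
    have h5 : (Y.map ((uE p).left.hom ≫ w p)).app p.1 (aE p)
        = (Y.map ((vE p).left.hom ≫ w p)).app p.1 (bE p) := by
      rw [Y.map_comp, Y.map_comp]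
      show (Y.map (w p)).app p.1 ((Y.map (uE p).left.hom).app p.1 (aE p))
        = (Y.map (w p)).app p.1 ((Y.map (vE p).left.hom).app p.1 (bE p))
      rw [hkey p]
    exact (congrArg (fun t => (Y.map t).app p.1 (aE p)) (hus p)).symm.trans
      (h5.trans (congrArg (fun t => (Y.map t).app p.1 (bE p)) (hvs p)))
  refine ⟨r₃, hr₃, g₃, u true ≫ s, u false ≫ s, ?_, ?_, ?_⟩
  · rw [Category.assoc, hs]; exact hu true
  · rw [Category.assoc, hs]; exact hu false
  · apply NatTrans.ext
    ext n x
    show (Y.map (u true ≫ s)).app n (f₁.app n x) = (Y.map (u false ≫ s)).app n (f₂.app n x)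
    rw [Y.map_comp, Y.map_comp]
    exact hsab ⟨n, x⟩

end Fact
section Main
variable (P Q : SSet.{0} → Prop) [Small.{0} (Subtype P)] [Small.{0} (Subtype Q)]
variable (X Y : SSet.{0} ⥤ SSet.{0})

lemma mkC_self {Pr : SSet.{0} → Prop} {A : SSet.{0}}
    (ω : CostructuredArrow (ObjectProperty.ι Pr) A) :
    mkC ω.left.1 ω.left.2 ω.hom = ω :=
  (CostructuredArrow.eq_mk ω).symm

variable {P Q X Y} in
/-- The main step: `Y ⋙ X` is a strict pointwise left Kan extension from `R`. -/
def mainPointwise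
    (hPpt : (Functor.LeftExtension.mk X
      (𝟙 (ObjectProperty.ι P ⋙ X))).IsPointwiseLeftKanExtension)
    (hQpt : (Functor.LeftExtension.mk Y
      (𝟙 (ObjectProperty.ι Q ⋙ Y))).IsPointwiseLeftKanExtension) :
    (Functor.LeftExtension.mk (Y ⋙ X)
      (𝟙 (ObjectProperty.ι (RR P Q) ⋙ (Y ⋙ X)))).IsPointwiseLeftKanExtension := by
  intro A
  classical
  have hfact : ∀ ψ : CostructuredArrow (ObjectProperty.ι P) (Y.obj A),
      ∃ (r : SSet.{0}) (_ : RR P Q r) (g : r ⟶ A) (f' : ψ.left.1 ⟶ Y.obj r),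
        f' ≫ Y.map g = ψ.hom :=
    fun ψ => factor_through hQpt A ψ.left.1 (sz_lt_lam_of_P P Q ψ.left.2) ψ.hom
  choose rF hrF gF fF hF using hfact
  set D := CostructuredArrow.proj (ObjectProperty.ι (RR P Q)) A ⋙
    (ObjectProperty.ι (RR P Q) ⋙ (Y ⋙ X)) with hD
  have WD : ∀ (c : Cocone D) (ψ : CostructuredArrow (ObjectProperty.ι P) (Y.obj A))
      (r' : SSet.{0}) (hr' : RR P Q r') (g' : r' ⟶ A) (f'' : (ψ.left.1 : SSet.{0}) ⟶ Y.obj r'),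
      f'' ≫ Y.map g' = ψ.hom →
        X.map f'' ≫ c.ι.app (mkC r' hr' g')
          = X.map (fF ψ) ≫ c.ι.app (mkC (rF ψ) (hrF ψ) (gF ψ)) := by
    intro c ψ r' hr' g' f'' hf''
    obtain ⟨r₃, hr₃, g₃, w₁, w₂, hw₁, hw₂, hww⟩ := factor_connect hQpt A ψ.left.1
      (sz_lt_lam_of_P P Q ψ.left.2) hr' (hrF ψ) g' (gF ψ) f'' (fF ψ)
      (by rw [hf'', hF ψ])
    have hμ₁ := c.w (CostructuredArrow.homMk ⟨w₁⟩ hw₁ : mkC r' hr' g' ⟶ mkC r₃ hr₃ g₃)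
    have hμ₂ := c.w (CostructuredArrow.homMk ⟨w₂⟩ hw₂ :
      mkC (rF ψ) (hrF ψ) (gF ψ) ⟶ mkC r₃ hr₃ g₃)
    have e₁ : D.map (CostructuredArrow.homMk ⟨w₁⟩ hw₁ : mkC r' hr' g' ⟶ mkC r₃ hr₃ g₃)
        = X.map (Y.map w₁) := rfl
    have e₂ : D.map (CostructuredArrow.homMk ⟨w₂⟩ hw₂ :
        mkC (rF ψ) (hrF ψ) (gF ψ) ⟶ mkC r₃ hr₃ g₃) = X.map (Y.map w₂) := rfl
    rw [← hμ₁, ← hμ₂, e₁, e₂]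
    exact (Category.assoc _ _ _).symm.trans ((congrArg (· ≫ c.ι.app (mkC r₃ hr₃ g₃))
      ((X.map_comp _ _).symm.trans ((congrArg X.map hww).trans (X.map_comp _ _)))).trans
        (Category.assoc _ _ _))
  -- the induced cocone on `P/(Y A)`
  let cP : ∀ _ : Cocone D, Cocone (CostructuredArrow.proj (ObjectProperty.ι P) (Y.obj A) ⋙
      (ObjectProperty.ι P ⋙ X)) := fun c =>
    { pt := c.pt
      ι :=
        { app := fun ψ => X.map (fF ψ) ≫ c.ι.app (mkC (rF ψ) (hrF ψ) (gF ψ))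
          naturality := fun ψ ψ' m => by
            have hw := CostructuredArrow.w m
            have hfac : ((ObjectProperty.ι P).map m.left ≫ fF ψ') ≫ Y.map (gF ψ')
                = ψ.hom := by
              rw [Category.assoc, hF ψ']
              exact hw
            have hwd := WD c ψ (rF ψ') (hrF ψ') (gF ψ')
              ((ObjectProperty.ι P).map m.left ≫ fF ψ') hfac
            dsimp only [Functor.comp_map, Functor.const_obj_map]
            refine Eq.trans ?_ (Category.comp_id _).symm
            refine (Category.assoc _ _ _).symm.trans ((congrArg (· ≫ c.ι.app
              (mkC (rF ψ') (hrF ψ') (gF ψ'))) (X.map_comp _ _).symm).trans ?_)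
            exact hwd } }
  refine
    { desc := fun c => (hPpt (Y.obj A)).desc (cP c)
      fac := fun c ω => ?_
      uniq := fun c m hm => ?_ }
  · refine (hPpt (Y.obj ω.left.1)).hom_ext (fun ψ' => ?_)
    have hfacd := (hPpt (Y.obj A)).fac (cP c)
      (mkC ψ'.left.1 ψ'.left.2 (ψ'.hom ≫ Y.map ω.hom))
    have hwd := WD c (mkC ψ'.left.1 ψ'.left.2 (ψ'.hom ≫ Y.map ω.hom))
      ω.left.1 ω.left.2 ω.hom ψ'.hom rfl
    have hfacd' : X.map ψ'.hom ≫ X.map (Y.map ω.hom) ≫ (hPpt (Y.obj A)).desc (cP c) =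
        X.map ψ'.hom ≫ c.ι.app ω := by
      exact (Category.assoc _ _ _).symm.trans ((congrArg (· ≫ (hPpt (Y.obj A)).desc (cP c))
        (X.map_comp _ _).symm).trans (hfacd.trans hwd.symm))
    exact hfacd'
  · refine (hPpt (Y.obj A)).hom_ext (fun ψ => ?_)
    have hfacd := (hPpt (Y.obj A)).fac (cP c) ψ
    have hmm := hm (mkC (rF ψ) (hrF ψ) (gF ψ))
    have key : X.map ψ.hom ≫ m = X.map (fF ψ) ≫ c.ι.app (mkC (rF ψ) (hrF ψ) (gF ψ)) := by
      exact (congrArg (· ≫ m) ((congrArg X.map (hF ψ).symm).trans (X.map_comp _ _))).trans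
        ((Category.assoc _ _ _).trans (congrArg (X.map (fF ψ) ≫ ·) hmm))
    exact key.trans hfacd.symm

end Main
end SmallComp


/-- The category `S^S` of small simplicial endofunctors of simplicial
sets is closed under composition: if `X` and `Y` are small functors from simplicial
sets to simplicial sets, then the composite `X ∘ Y` is again a small functor. -/
theorem smallFunctor_comp (X Y : SSet.{0} ⥤ SSet.{0})
    (hX : IsSmallFunctor X) (hY : IsSmallFunctor Y) :
    IsSmallFunctor (Y ⋙ X) := by
  obtain ⟨P, hPs, hPk⟩ := hX
  obtain ⟨Q, hQs, hQk⟩ := hY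
  haveI := hPs
  haveI := hQs
  haveI := hPk
  haveI := hQk
  haveI := SmallComp.hasPointwiseLKE P (ObjectProperty.ι P ⋙ X)
  haveI := SmallComp.hasPointwiseLKE Q (ObjectProperty.ι Q ⋙ Y)
  have hPpt : (Functor.LeftExtension.mk X
      (𝟙 (ObjectProperty.ι P ⋙ X))).IsPointwiseLeftKanExtension :=
    Functor.isPointwiseLeftKanExtensionOfIsLeftKanExtension X (𝟙 _)
  have hQpt : (Functor.LeftExtension.mk Y
      (𝟙 (ObjectProperty.ι Q ⋙ Y))).IsPointwiseLeftKanExtension :=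
    Functor.isPointwiseLeftKanExtensionOfIsLeftKanExtension Y (𝟙 _)
  exact ⟨SmallComp.RR P Q, SmallComp.small_RR P Q,
    (SmallComp.mainPointwise hPpt hQpt).isLeftKanExtension⟩
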